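/- arXiv:2602.09360 — 5 statements merged into one kernel-verified Lean document; each statement's English description precedes it below -/
import Mathlib

section
/- If E is a Σ_ucr-controllability set from G to R, then for the downward-closed set P(E) = ⋃_{W∈E} 𝒫(W), the witnesses W' in conditions (a) and (b) of the definition of controllability set can additionally be chosen to satisfy W' ⊆ ⋃_{(x,z)∈W} {x' : x →σ x'} × {z' : z →σ z'}. -/
/-- An automaton with state type `S` and event alphabet `E`:
a transition relation and a set of initial states. -/
structure Automaton (S : Type) (E : Type) where
  trans : S → E → S → Prop
  init : Set S

/-- Extension of the transition relation to finite event sequences. -/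
def TransSeq {S E : Type} (G : Automaton S E) : S → List E → S → Prop
  | x, [], x' => x = x'
  | x, σ :: s, x'' => ∃ x', G.trans x σ x' ∧ TransSeq G x' s x''

/-- `x` is `s`-reachable in `G`. -/
def ReachSeq {S E : Type} (G : Automaton S E) (s : List E) (x : S) : Prop :=
  ∃ x₀ ∈ G.init, TransSeq G x₀ s x

/-- `x` is reachable in `G`. -/
def Reachable {S E : Type} (G : Automaton S E) (x : S) : Prop :=
  ∃ s : List E, ReachSeq G s x

/-- The language of an automaton: all event sequences executable from some initial state. -/
def Lang {S E : Type} (G : Automaton S E) : Set (List E) :=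
  {s | ∃ x, ReachSeq G s x}

/-- `Φ` is a simulation from `G` to `R`. -/
def IsSimulation {X Z E : Type} (G : Automaton X E) (R : Automaton Z E)
    (Φ : Set (X × Z)) : Prop :=
  (∀ x₀ ∈ G.init, ∃ z₀ ∈ R.init, (x₀, z₀) ∈ Φ) ∧
  (∀ p ∈ Φ, ∀ (σ : E), ∀ x', G.trans p.1 σ x' →
    ∃ z', R.trans p.2 σ z' ∧ (x', z') ∈ Φ)

/-- `G` is simulated by `R` (`G ⊑ R`). -/
def Simulated {X Z E : Type} (G : Automaton X E) (R : Automaton Z E) : Prop :=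
  ∃ Φ, IsSimulation G R Φ

/-- `Φ` is a covariant-contravariant simulation from `G` to `R`, with required events `Sr`. -/
def IsCCSimulation {X Z E : Type} (Sr : Set E) (G : Automaton X E) (R : Automaton Z E)
    (Φ : Set (X × Z)) : Prop :=
  IsSimulation G R Φ ∧
  (∀ p ∈ Φ, ∀ σ ∈ Sr, ∀ z', R.trans p.2 σ z' →
    ∃ x', G.trans p.1 σ x' ∧ (x', z') ∈ Φ)

/-- `G` is cc-simulated by `R` (`G ⊑_cc R`). -/
def CCSimulated {X Z E : Type} (Sr : Set E) (G : Automaton X E) (R : Automaton Z E) : Prop :=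
  ∃ Φ, IsCCSimulation Sr G R Φ

/-- `Φ` is a bisimulation from `G` to `R`: both `Φ` and its inverse are simulations. -/
def IsBisimulation {X Z E : Type} (G : Automaton X E) (R : Automaton Z E)
    (Φ : Set (X × Z)) : Prop :=
  IsSimulation G R Φ ∧ IsSimulation R G {p | (p.2, p.1) ∈ Φ}

/-- `G` is bisimilar to `R` (`G ≃ R`). -/
def Bisimilar {X Z E : Type} (G : Automaton X E) (R : Automaton Z E) : Prop :=
  ∃ Φ, IsBisimulation G R Φ

/-- `Φ` is a `Σ_uc`-simulation from `G` to `R`. -/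
def IsUcSimulation {X Z E : Type} (Suc : Set E) (G : Automaton X E) (R : Automaton Z E)
    (Φ : Set (X × Z)) : Prop :=
  (∀ x₀ ∈ G.init, ∃ z₀ ∈ R.init, (x₀, z₀) ∈ Φ) ∧
  (∀ p ∈ Φ, ∀ σ ∈ Suc, ∀ x', G.trans p.1 σ x' →
    ∃ z', R.trans p.2 σ z' ∧ (x', z') ∈ Φ)

/-- `Φ` is a `Σ_ucr`-simulation from `G` to `R`:
(initial state), (Σ_uc-forward) and (Σ_r-backward). -/
def IsUcrSimulation {X Z E : Type} (Suc Sr : Set E) (G : Automaton X E) (R : Automaton Z E)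
    (Φ : Set (X × Z)) : Prop :=
  IsUcSimulation Suc G R Φ ∧
  (∀ p ∈ Φ, ∀ σ ∈ Sr, ∀ z', R.trans p.2 σ z' →
    ∃ x', G.trans p.1 σ x' ∧ (x', z') ∈ Φ)

/-- Synchronous composition `S || G`. -/
def Sync {Y X E : Type} (S : Automaton Y E) (G : Automaton X E) : Automaton (Y × X) E where
  trans p σ q := S.trans p.1 σ q.1 ∧ G.trans p.2 σ q.2
  init := S.init ×ˢ G.init

/-- `S` is `Σ_uc`-admissible with respect to `G`. -/
def Admissible {Y X E : Type} (Suc : Set E) (S : Automaton Y E) (G : Automaton X E) : Prop :=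
  ∀ p : Y × X, Reachable (Sync S G) p → ∀ σ ∈ Suc,
    (∃ x', G.trans p.2 σ x') → ∃ q, (Sync S G).trans p σ q

/-- `match_{G,R}(W, σ, W')`. -/
def MatchW {X Z E : Type} (G : Automaton X E) (R : Automaton Z E)
    (W : Set (X × Z)) (σ : E) (W' : Set (X × Z)) : Prop :=
  ∀ p ∈ W, ∀ x', G.trans p.1 σ x' →
    ∃ z', R.trans p.2 σ z' ∧ (x', z') ∈ W'

/-- `Ecs` is a `Σ_ucr`-controllability set from `G` to `R`. -/
def ControlSet {X Z E : Type} (Suc Sr : Set E) (G : Automaton X E) (R : Automaton Z E)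
    (Ecs : Set (Set (X × Z))) : Prop :=
  (∃ W₀ ∈ Ecs, ∀ x₀ ∈ G.init, ∃ z₀ ∈ R.init, (x₀, z₀) ∈ W₀) ∧
  (∀ W ∈ Ecs, ∀ σ ∈ Suc, ∃ W' ∈ Ecs, MatchW G R W σ W') ∧
  (∀ W ∈ Ecs, ∀ p ∈ W, ∀ σ ∈ Sr, ∀ z', R.trans p.2 σ z' →
    ∃ x', ∃ W' ∈ Ecs, G.trans p.1 σ x' ∧ (x', z') ∈ W' ∧ MatchW G R W σ W')

/-- The downward closure `P(E) = ⋃_{W ∈ E} 𝒫(W)`. -/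
def PE {X Z : Type} (Ecs : Set (Set (X × Z))) : Set (Set (X × Z)) :=
  {W | ∃ W' ∈ Ecs, W ⊆ W'}

/-- `⋃_{(x,z) ∈ W} {x' : x →σ x'} × {z' : z →σ z'}`. -/
def SuccSet {X Z E : Type} (G : Automaton X E) (R : Automaton Z E)
    (W : Set (X × Z)) (σ : E) : Set (X × Z) :=
  {q | ∃ p ∈ W, G.trans p.1 σ q.1 ∧ R.trans p.2 σ q.2}

/-- The automaton `𝒜(E)` induced by a `Σ_ucr`-controllability set `Ecs`.
Its states are the members of `P(Ecs)` (enforced in the transition relation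
and initial-state set). -/
def AutA {X Z E : Type} (G : Automaton X E) (R : Automaton Z E)
    (Ecs : Set (Set (X × Z))) : Automaton (Set (X × Z)) E where
  trans W σ W' :=
    W ∈ PE Ecs ∧ W' ∈ PE Ecs ∧
    (∃ p ∈ W, ∃ q ∈ W', G.trans p.1 σ q.1 ∧ R.trans p.2 σ q.2) ∧
    MatchW G R W σ W' ∧ W' ⊆ SuccSet G R W σ
  init := {W₀ | W₀ ∈ PE Ecs ∧ W₀ ⊆ G.init ×ˢ R.init ∧
    ∀ x₀ ∈ G.init, ∃ z₀ ∈ R.init, (x₀, z₀) ∈ W₀}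

/-- A deterministic automaton: a single initial state, and at most one
`σ`-successor of each state. -/
def Deterministic {S E : Type} (G : Automaton S E) : Prop :=
  (∃ x₀, G.init = {x₀}) ∧
  ∀ x (σ : E) x₁ x₂, G.trans x σ x₁ → G.trans x σ x₂ → x₁ = x₂

/-- `Φ` is uniform with respect to `Sr`. -/
def UniformRel {X Z E : Type} (Sr : Set E) (G : Automaton X E) (R : Automaton Z E)
    (Φ : Set (X × Z)) : Prop :=
  ∀ (s : List E), ∀ p₁ ∈ Φ, ∀ p₂ ∈ Φ,
    ReachSeq G s p₁.1 → ReachSeq G s p₂.1 → ReachSeq R s p₁.2 → ReachSeq R s p₂.2 →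
    ∀ σ ∈ Sr, (∃ z', R.trans p₁.2 σ z') → ∀ x₂', G.trans p₂.1 σ x₂' →
      ∃ z₂', R.trans p₂.2 σ z₂' ∧ (x₂', z₂') ∈ Φ

/-- The fixpoint operator `F_{(G,R)}`. -/
def Fop {X Z E : Type} (Suc Sr : Set E) (G : Automaton X E) (R : Automaton Z E)
    (Ecs : Set (Set (X × Z))) : Set (Set (X × Z)) :=
  {W | W ∈ Ecs ∧
    (∀ σ ∈ Suc, ∃ W' ∈ Ecs, MatchW G R W σ W') ∧
    (∀ p ∈ W, ∀ σ ∈ Sr, ∀ z', R.trans p.2 σ z' →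
      ∃ x', ∃ W' ∈ Ecs, G.trans p.1 σ x' ∧ (x', z') ∈ W' ∧ MatchW G R W σ W')}

/-- The greatest fixpoint `E↑` of `F_{(G,R)}`: the union of all post-fixpoints. -/
def Egfp {X Z E : Type} (Suc Sr : Set E) (G : Automaton X E) (R : Automaton Z E) :
    Set (Set (X × Z)) :=
  ⋃₀ {Ecs | Ecs ⊆ Fop Suc Sr G R Ecs}

/-- for the downward closure, witnesses in conditions (a) and (b)
can additionally be chosen inside the set of σ-successors. -/
theorem controlSet_downward_closure_strong_witnesses {E X Z : Type} (Suc Sr : Set E)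
    (G : Automaton X E) (R : Automaton Z E) (Ecs : Set (Set (X × Z)))
    (hE : ControlSet Suc Sr G R Ecs) :
    (∀ W ∈ PE Ecs, ∀ σ ∈ Suc, ∃ W' ∈ PE Ecs,
      MatchW G R W σ W' ∧ W' ⊆ SuccSet G R W σ) ∧
    (∀ W ∈ PE Ecs, ∀ p ∈ W, ∀ σ ∈ Sr, ∀ z', R.trans p.2 σ z' →
      ∃ x', ∃ W' ∈ PE Ecs, G.trans p.1 σ x' ∧ (x', z') ∈ W' ∧
        MatchW G R W σ W' ∧ W' ⊆ SuccSet G R W σ) := by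
  obtain ⟨-, ha, hb⟩ := hE
  constructor
  · rintro W ⟨V, hV, hWV⟩ σ hσ
    obtain ⟨V', hV', hm⟩ := ha V hV σ hσ
    refine ⟨V' ∩ SuccSet G R W σ, ⟨V', hV', Set.inter_subset_left⟩, ?_,
      Set.inter_subset_right⟩
    intro p hp x' hx'
    obtain ⟨z', hz', hmem⟩ := hm p (hWV hp) x' hx'
    exact ⟨z', hz', hmem, p, hp, hx', hz'⟩
  · rintro W ⟨V, hV, hWV⟩ p hp σ hσ z' hz'
    obtain ⟨x', V', hV', hgx, hmem, hm⟩ := hb V hV p (hWV hp) σ hσ z' hz'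
    refine ⟨x', V' ∩ SuccSet G R W σ, ⟨V', hV', Set.inter_subset_left⟩, hgx,
      ⟨hmem, p, hp, hgx, hz'⟩, ?_, Set.inter_subset_right⟩
    intro q hq x₁ hx₁
    obtain ⟨z₁, hz₁, hmem₁⟩ := hm q (hWV hq) x₁ hx₁
    exact ⟨z₁, hz₁, hmem₁, q, hq, hx₁, hz₁⟩
end

section
/- For a Σ_ucr-controllability set E from G to R, the automaton 𝒜(E) satisfies: for any sequence s ∈ Σ*, initial state W₀ of 𝒜(E) and state W of 𝒜(E), if W₀ →s W then the G-projection π_G(W) = {x : ∃ z, (x,z) ∈ W} equals the set Reach(s, X₀) = {x : x₀ →s x for some x₀ ∈ X₀} of s-reachable states of G. -/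
lemma autA_step_proj {E X Z : Type}
    (G : Automaton X E) (R : Automaton Z E) (Ecs : Set (Set (X × Z)))
    {W W' : Set (X × Z)} {σ : E} (h : (AutA G R Ecs).trans W σ W') :
    {x' | ∃ z', (x', z') ∈ W'} = {x' | ∃ x, (∃ z, (x, z) ∈ W) ∧ G.trans x σ x'} := by
  obtain ⟨-, -, -, hmatch, hsucc⟩ := h
  ext x'
  constructor
  · rintro ⟨z', hz'⟩
    obtain ⟨p, hp, hg, _⟩ := hsucc hz'
    exact ⟨p.1, ⟨p.2, hp⟩, hg⟩
  · rintro ⟨x, ⟨z, hxz⟩, hg⟩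
    obtain ⟨z', _, hz'⟩ := hmatch (x, z) hxz x' hg
    exact ⟨z', hz'⟩

lemma autA_seq_proj {E X Z : Type}
    (G : Automaton X E) (R : Automaton Z E) (Ecs : Set (Set (X × Z)))
    (s : List E) : ∀ W W' : Set (X × Z), TransSeq (AutA G R Ecs) W s W' →
    {x' | ∃ z', (x', z') ∈ W'} = {x' | ∃ x, (∃ z, (x, z) ∈ W) ∧ TransSeq G x s x'} := by
  induction s with
  | nil =>
    intro W W' h
    cases h
    ext x; simp [TransSeq]
  | cons σ t ih =>
    rintro W W' ⟨W₁, h1, ht⟩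
    rw [ih W₁ W' ht]
    have hstep := autA_step_proj G R Ecs h1
    ext x'
    constructor
    · rintro ⟨x₁, hx₁, hts⟩
      have : x₁ ∈ {x' | ∃ x, (∃ z, (x, z) ∈ W) ∧ G.trans x σ x'} := hstep ▸ hx₁
      obtain ⟨x, hx, hg⟩ := this
      exact ⟨x, hx, x₁, hg, hts⟩
    · rintro ⟨x, hx, x₁, hg, hts⟩
      have : x₁ ∈ {x' | ∃ z', (x', z') ∈ W₁} := by
        rw [hstep]; exact ⟨x, hx, hg⟩
      exact ⟨x₁, this, hts⟩

/-- for any state `W` of `𝒜(E)` reachable from an initial state via `s`,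
the `G`-projection of `W` equals the set of `s`-reachable states of `G`. -/
theorem autA_projection_eq_reach {E X Z : Type} (Suc Sr : Set E)
    (G : Automaton X E) (R : Automaton Z E) (Ecs : Set (Set (X × Z)))
    (hE : ControlSet Suc Sr G R Ecs) (s : List E) (W₀ W : Set (X × Z))
    (hW₀ : W₀ ∈ (AutA G R Ecs).init) (hW : W ∈ PE Ecs)
    (hs : TransSeq (AutA G R Ecs) W₀ s W) :
    {x | ∃ z, (x, z) ∈ W} = {x | ReachSeq G s x} := by
  obtain ⟨hPE, hsub, hinit⟩ := hW₀
  have hproj0 : {x | ∃ z, (x, z) ∈ W₀} = G.init := by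
    ext x
    constructor
    · rintro ⟨z, hz⟩
      exact (hsub hz).1
    · intro hx
      obtain ⟨z₀, _, hz₀⟩ := hinit x hx
      exact ⟨z₀, hz₀⟩
  rw [autA_seq_proj G R Ecs s W₀ W hs]
  ext x
  constructor
  · rintro ⟨x₀, hx₀, hts⟩
    have : x₀ ∈ G.init := hproj0 ▸ hx₀
    exact ⟨x₀, this, hts⟩
  · rintro ⟨x₀, hx₀, hts⟩
    have : x₀ ∈ {x | ∃ z, (x, z) ∈ W₀} := hproj0 ▸ hx₀
    exact ⟨x₀, this, hts⟩
end

section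
/- For any Σ_ucr-controllability set E from plant G to specification R, the automaton 𝒜(E) is a Σ_uc-admissible supervisor and the synchronous composition 𝒜(E)||G is cc-simulated by R; in particular the relation Φ_E = { ((W,x), z) : (x,z) ∈ W, W a state of 𝒜(E) } is a cc-simulation from 𝒜(E)||G to R. -/
lemma autA_trans_mk {E X Z : Type} {G : Automaton X E} {R : Automaton Z E}
    {Ecs : Set (Set (X × Z))} {W V V' : Set (X × Z)} {σ : E}
    (hWV : W ⊆ V) (hV : V ∈ Ecs) (hV' : V' ∈ Ecs)
    (hm : MatchW G R V σ V')
    {x : X} {z : Z} (hxz : (x, z) ∈ W) {x' : X} {z' : Z}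
    (hx' : G.trans x σ x') (hz' : R.trans z σ z') (hq : (x', z') ∈ V') :
    (AutA G R Ecs).trans W σ (V' ∩ SuccSet G R W σ) := by
  have hqS : (x', z') ∈ SuccSet G R W σ := ⟨(x, z), hxz, hx', hz'⟩
  refine ⟨⟨V, hV, hWV⟩, ⟨V', hV', Set.inter_subset_left⟩,
    ⟨(x, z), hxz, (x', z'), ⟨hq, hqS⟩, hx', hz'⟩, ?_, Set.inter_subset_right⟩
  intro p hp x₁ ht
  obtain ⟨z₁, hz₁, hmem⟩ := hm p (hWV hp) x₁ ht
  exact ⟨z₁, hz₁, ⟨hmem, p, hp, ht, hz₁⟩⟩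

lemma sync_inv_step {E X Z : Type} {G : Automaton X E} {R : Automaton Z E}
    {Ecs : Set (Set (X × Z))} {p q : Set (X × Z) × X} {σ : E}
    (hp : p.1 ∈ PE Ecs ∧ ∃ z, (p.2, z) ∈ p.1)
    (ht : (Sync (AutA G R Ecs) G).trans p σ q) :
    q.1 ∈ PE Ecs ∧ ∃ z, (q.2, z) ∈ q.1 := by
  obtain ⟨hA, hG⟩ := ht
  obtain ⟨_, hPE', _, hm, _⟩ := hA
  obtain ⟨_, z, hz⟩ := hp
  obtain ⟨z', hz', hq⟩ := hm (p.2, z) hz q.2 hG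
  exact ⟨hPE', z', hq⟩

lemma sync_inv {E X Z : Type} {G : Automaton X E} {R : Automaton Z E}
    {Ecs : Set (Set (X × Z))} {p : Set (X × Z) × X}
    (hp : Reachable (Sync (AutA G R Ecs) G) p) :
    p.1 ∈ PE Ecs ∧ ∃ z, (p.2, z) ∈ p.1 := by
  obtain ⟨s, p₀, h₀, hts⟩ := hp
  have hinv : p₀.1 ∈ PE Ecs ∧ ∃ z, (p₀.2, z) ∈ p₀.1 := by
    obtain ⟨⟨hPE, _, hall⟩, hx₀⟩ := h₀
    obtain ⟨z₀, hz₀, hm⟩ := hall p₀.2 hx₀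
    exact ⟨hPE, z₀, hm⟩
  clear h₀
  induction s generalizing p₀ with
  | nil => cases hts; exact hinv
  | cons σ s ih =>
    obtain ⟨p₁, ht, hts'⟩ := hts
    exact ih p₁ hts' (sync_inv_step hinv ht)

/-- `𝒜(E)` is a `Σ_uc`-admissible supervisor and `Φ_E` is a
cc-simulation from `𝒜(E)||G` to `R`. -/
theorem autA_admissible_and_ccSimulation {E X Z : Type} (Suc Sr : Set E)
    (G : Automaton X E) (R : Automaton Z E) (Ecs : Set (Set (X × Z)))
    (hE : ControlSet Suc Sr G R Ecs) :
    Admissible Suc (AutA G R Ecs) G ∧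
    IsCCSimulation Sr (Sync (AutA G R Ecs) G) R
      {q : (Set (X × Z) × X) × Z | (q.1.2, q.2) ∈ q.1.1 ∧ q.1.1 ∈ PE Ecs} ∧
    CCSimulated Sr (Sync (AutA G R Ecs) G) R := by
  obtain ⟨_, hE2, hE3⟩ := hE
  have hadm : Admissible Suc (AutA G R Ecs) G := by
    intro p hreach σ hσ ⟨x', hx'⟩
    obtain ⟨⟨V, hV, hWV⟩, z, hz⟩ := sync_inv hreach
    obtain ⟨V', hV', hm⟩ := hE2 V hV σ hσ
    obtain ⟨z', hz', hq⟩ := hm (p.2, z) (hWV hz) x' hx'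
    exact ⟨(V' ∩ SuccSet G R p.1 σ, x'),
      autA_trans_mk hWV hV hV' hm hz hx' hz' hq, hx'⟩
  have hcc : IsCCSimulation Sr (Sync (AutA G R Ecs) G) R
      {q : (Set (X × Z) × X) × Z | (q.1.2, q.2) ∈ q.1.1 ∧ q.1.1 ∈ PE Ecs} := by
    refine ⟨⟨?_, ?_⟩, ?_⟩
    · rintro ⟨W₀, x₀⟩ ⟨⟨hPE, _, hall⟩, hx₀⟩
      obtain ⟨z₀, hz₀, hm⟩ := hall x₀ hx₀
      exact ⟨z₀, hz₀, hm, hPE⟩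
    · rintro ⟨⟨W, x⟩, z⟩ ⟨hxz, hPE⟩ σ ⟨W', x'⟩ ⟨hA, hG⟩
      obtain ⟨_, hPE', _, hm, _⟩ := hA
      obtain ⟨z', hz', hq⟩ := hm (x, z) hxz x' hG
      exact ⟨z', hz', hq, hPE'⟩
    · rintro ⟨⟨W, x⟩, z⟩ ⟨hxz, V, hV, hWV⟩ σ hσ z' hz'
      obtain ⟨x', V', hV', hx', hq, hm⟩ := hE3 V hV (x, z) (hWV hxz) σ hσ z' hz'
      refine ⟨(V' ∩ SuccSet G R W σ, x'),
        ⟨autA_trans_mk hWV hV hV' hm hxz hx' hz' hq, hx'⟩,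
        ⟨hq, (x, z), hxz, hx', hz'⟩, V', hV', Set.inter_subset_left⟩
  exact ⟨hadm, hcc, _, hcc⟩
end

section
/- Let G be a plant and R a specification, S a Σ_uc-admissible supervisor, and Φ a cc-simulation from S||G to R. Then the set E(Φ) = { θ_y : y ∈ Y }, where θ_y = { (x,z) : ((y,x),z) ∈ Φ and (y,x) is reachable in S||G }, is a Σ_ucr-controllability set from G to R. -/
lemma transSeq_snoc {S E : Type} (G : Automaton S E) (σ : E) :
    ∀ (s : List E) (x x' x'' : S), TransSeq G x s x' → G.trans x' σ x'' →
      TransSeq G x (s ++ [σ]) x'' := by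
  intro s
  induction s with
  | nil =>
      intro x x' x'' h h'
      have hx : x = x' := h
      subst hx
      exact show ∃ x₁, G.trans x σ x₁ ∧ TransSeq G x₁ [] x'' from ⟨x'', h', rfl⟩
  | cons a t ih =>
      rintro x x' x'' ⟨x₁, h1, h2⟩ h'
      exact ⟨x₁, h1, ih x₁ x' x'' h2 h'⟩

lemma reachable_step {S E : Type} (G : Automaton S E) {x x' : S} {σ : E}
    (h : Reachable G x) (h' : G.trans x σ x') : Reachable G x' := by
  obtain ⟨s, x₀, hx₀, hts⟩ := h
  exact ⟨s ++ [σ], x₀, hx₀, transSeq_snoc G σ s x₀ x x' hts h'⟩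

/-- `E(Φ) = { θ_y : y ∈ Y }` is a `Σ_ucr`-controllability set. -/
theorem ePhi_controlSet {E X Z Y : Type} (Suc Sr : Set E)
    (G : Automaton X E) (R : Automaton Z E) (S : Automaton Y E)
    (hY : S.init.Nonempty)
    (Φ : Set ((Y × X) × Z))
    (hS : Admissible Suc S G)
    (hΦ : IsCCSimulation Sr (Sync S G) R Φ) :
    ControlSet Suc Sr G R
      {W | ∃ y : Y, W = {p : X × Z |
        ((y, p.1), p.2) ∈ Φ ∧ Reachable (Sync S G) (y, p.1)}} := by
  obtain ⟨⟨hinit, hfwd⟩, hback⟩ := hΦ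
  obtain ⟨y₀, hy₀⟩ := hY
  refine ⟨⟨_, ⟨y₀, rfl⟩, ?_⟩, ?_, ?_⟩
  · -- istate
    intro x₀ hx₀
    obtain ⟨z₀, hz₀, hmem⟩ := hinit (y₀, x₀) (Set.mk_mem_prod hy₀ hx₀)
    exact ⟨z₀, hz₀, hmem, [], (y₀, x₀), Set.mk_mem_prod hy₀ hx₀, rfl⟩
  · -- (a)
    rintro W ⟨y, rfl⟩ σ hσ
    by_cases hex : ∃ p : X × Z, p ∈ {p : X × Z |
        ((y, p.1), p.2) ∈ Φ ∧ Reachable (Sync S G) (y, p.1)} ∧ ∃ x', G.trans p.1 σ x'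
    · obtain ⟨⟨x, z⟩, ⟨hΦp, hreach⟩, hx'⟩ := hex
      obtain ⟨q, hqS, _⟩ := hS (y, x) hreach σ hσ hx'
      refine ⟨_, ⟨q.1, rfl⟩, ?_⟩
      rintro ⟨x₂, z₂⟩ ⟨hΦ2, hreach2⟩ x₂' htr
      obtain ⟨z₂', hz₂', hΦ2'⟩ := hfwd ((y, x₂), z₂) hΦ2 σ (q.1, x₂') ⟨hqS, htr⟩
      exact ⟨z₂', hz₂', hΦ2', reachable_step _ hreach2 ⟨hqS, htr⟩⟩
    · push_neg at hex
      refine ⟨_, ⟨y, rfl⟩, ?_⟩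
      intro p hp x' htr
      exact absurd htr (hex p hp x')
  · -- (b)
    rintro W ⟨y, rfl⟩ ⟨x, z⟩ ⟨hΦp, hreach⟩ σ hσ z' hz'
    obtain ⟨⟨y₁, x'⟩, ⟨hyS, hxG⟩, hΦ'⟩ := hback ((y, x), z) hΦp σ hσ z' hz'
    refine ⟨x', _, ⟨y₁, rfl⟩, hxG,
      ⟨hΦ', reachable_step _ hreach ⟨hyS, hxG⟩⟩, ?_⟩
    rintro ⟨x₂, z₂⟩ ⟨hΦ2, hreach2⟩ x₂' htr
    obtain ⟨z₂', hz₂', hΦ2'⟩ := hfwd ((y, x₂), z₂) hΦ2 σ (y₁, x₂') ⟨hyS, htr⟩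
    exact ⟨z₂', hz₂', hΦ2', reachable_step _ hreach2 ⟨hyS, htr⟩⟩
end

section
/- There exists a Σ_ucr-controllability set from G to R if and only if the greatest fixpoint E↑ of the monotone operator F_{(G,R)} contains some W₀ with the property that for every x₀ ∈ X₀ there exists z₀ ∈ Z₀ with (x₀, z₀) ∈ W₀. -/
/-- a `Σ_ucr`-controllability set exists iff the greatest fixpoint `E↑`
of `F_{(G,R)}` contains a witness for the initial-state condition. -/
theorem controlSet_exists_iff_gfp_witness {E X Z : Type} (Suc Sr : Set E)
    (G : Automaton X E) (R : Automaton Z E) :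
    (∃ Ecs : Set (Set (X × Z)), ControlSet Suc Sr G R Ecs) ↔
      ∃ W₀ ∈ Egfp Suc Sr G R, ∀ x₀ ∈ G.init, ∃ z₀ ∈ R.init, (x₀, z₀) ∈ W₀ := by
  constructor
  · rintro ⟨Ecs, ⟨W₀, hW₀, hinit⟩, huc, hr⟩
    have hpost : Ecs ⊆ Fop Suc Sr G R Ecs := fun W hW =>
      ⟨hW, huc W hW, hr W hW⟩
    exact ⟨W₀, ⟨Ecs, hpost, hW₀⟩, hinit⟩
  · rintro ⟨W₀, hW₀, hinit⟩
    refine ⟨Egfp Suc Sr G R, ⟨W₀, hW₀, hinit⟩, ?_, ?_⟩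
    · intro W hW σ hσ
      obtain ⟨Ecs, hpost, hWE⟩ := hW
      obtain ⟨_, huc, _⟩ := hpost hWE
      obtain ⟨W', hW', hm⟩ := huc σ hσ
      exact ⟨W', ⟨Ecs, hpost, hW'⟩, hm⟩
    · intro W hW p hp σ hσ z' hz'
      obtain ⟨Ecs, hpost, hWE⟩ := hW
      obtain ⟨_, _, hr⟩ := hpost hWE
      obtain ⟨x', W', hW', h1, h2, h3⟩ := hr p hp σ hσ z' hz'
      exact ⟨x', W', ⟨Ecs, hpost, hW'⟩, h1, h2, h3⟩
end
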